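/- In PSL(2,ℤ) with standard generators a of order 2 and b of order 3, the element g = (ab)² is a generalised 3-torsion element: g*(b⁻¹*g*b)*(b*g*b⁻¹) = 1. -/

import Mathlib

/-- Relations for `PSL(2,ℤ) ≅ ⟨a, b | a² = b³ = 1⟩`. -/
def pslRels : Set (FreeGroup (Fin 2)) :=
  {FreeGroup.of 0 ^ 2, FreeGroup.of 1 ^ 3}

lemma psl_rel_of_mem {x : FreeGroup (Fin 2)} (hx : x ∈ pslRels) :
    (QuotientGroup.mk x : PresentedGroup pslRels) = 1 :=
  (QuotientGroup.eq_one_iff x).mpr (Subgroup.subset_normalClosure hx)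

lemma psl_a_sq : (PresentedGroup.of 0 : PresentedGroup pslRels) ^ 2 = 1 := by
  have := psl_rel_of_mem (x := FreeGroup.of 0 ^ 2) (Or.inl rfl)
  exact this

lemma psl_b_cube : (PresentedGroup.of 1 : PresentedGroup pslRels) ^ 3 = 1 := by
  have := psl_rel_of_mem (x := FreeGroup.of 1 ^ 3) (Or.inr rfl)
  exact this

lemma gen_calc {G : Type*} [Group G] (a b : G) (ha : a ^ 2 = 1) (hb : b ^ 3 = 1) :
    (a*b)^2 * (b⁻¹ * (a*b)^2 * b) * (b * (a*b)^2 * b⁻¹) = 1 := by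
  have ha' : a * a = 1 := by rwa [pow_two] at ha
  have hb' : b * (b * b) = 1 := by rwa [pow_succ, pow_two, mul_assoc] at hb
  have hbinv : b⁻¹ = b * b := inv_eq_of_mul_eq_one_right hb'
  have ha2 : ∀ x : G, a * (a * x) = x := fun x => by rw [← mul_assoc, ha', one_mul]
  have hb3 : ∀ x : G, b * (b * (b * x)) = x := fun x => by
    rw [← mul_assoc, ← mul_assoc, mul_assoc b b b, hb', one_mul]
  simp only [hbinv, pow_two, mul_assoc, ha2, hb3, hb', ha', mul_one, one_mul]

theorem abSquared_genThreeTorsion :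
    letI a : PresentedGroup pslRels := PresentedGroup.of 0
    letI b : PresentedGroup pslRels := PresentedGroup.of 1
    letI g := (a * b) ^ 2
    g * (b⁻¹ * g * b) * (b * g * b⁻¹) = 1 :=
  gen_calc _ _ psl_a_sq psl_b_cube
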